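/- Let d ≥ 1 and let Φ_d be the matrix indexed by Fin d × Fin d whose entry at row (a,b), column (c,e) is 1 if a = b and c = e, and 0 otherwise (the rank-one projector onto the unnormalized maximally entangled vector ∑_i e_i ⊗ e_i). For a real number p ≥ 0, there exists a density matrix ρ₀ on Fin d such that (ρ₀ ⊗ I_d) − p·Φ_d is positive semidefinite if and only if p ≤ 1/d². (The maximum probability of simulating an ideal quantum channel—the identity channel—from the future to the past is 1/d², the success probability of the standard probabilistic teleportation protocol.) -/

import Mathlib

open Matrix
open scoped Kronecker ComplexOrder

/-- The rank-one projector onto the unnormalized maximally entangled vector,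
i.e. the Choi matrix of the identity channel on a d-dimensional system. -/
noncomputable def PhiMax (d : ℕ) : Matrix (Fin d × Fin d) (Fin d × Fin d) ℂ :=
  Matrix.of fun p q => if p.1 = p.2 ∧ q.1 = q.2 then 1 else 0

section aux
variable {d : ℕ}

/-- the unnormalized maximally entangled vector -/
noncomputable def vI (d : ℕ) : Fin d × Fin d → ℂ := fun q => if q.1 = q.2 then 1 else 0

lemma phi_mulVec (x : Fin d × Fin d → ℂ) :
    (PhiMax d) *ᵥ x = fun q => if q.1 = q.2 then (∑ i, x (i, i)) else 0 := by
  funext q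
  simp only [PhiMax, mulVec, dotProduct, of_apply]
  rw [Fintype.sum_prod_type]
  by_cases h : q.1 = q.2 <;> simp [h, Finset.sum_ite_eq', ite_and]

lemma phi_quadform (x : Fin d × Fin d → ℂ) :
    star x ⬝ᵥ ((PhiMax d) *ᵥ x) =
      (starRingEnd ℂ) (∑ i, x (i, i)) * (∑ i, x (i, i)) := by
  rw [phi_mulVec]
  simp only [dotProduct, Pi.star_apply]
  rw [Fintype.sum_prod_type]
  simp [mul_ite, Finset.sum_ite_eq', Finset.mul_sum, map_sum]
  rw [Finset.sum_comm]
  simp [Finset.sum_mul]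

lemma kron_quadform (ρ₀ : Matrix (Fin d) (Fin d) ℂ) :
    star (vI d) ⬝ᵥ ((ρ₀ ⊗ₖ (1 : Matrix (Fin d) (Fin d) ℂ)) *ᵥ (vI d)) = ρ₀.trace := by
  simp only [dotProduct, mulVec, kroneckerMap_apply, vI, Pi.star_apply]
  rw [Fintype.sum_prod_type]
  simp only [Fintype.sum_prod_type]
  simp [one_apply, mul_ite, ite_and, Finset.sum_ite_eq', Matrix.trace, Matrix.diag]

lemma phi_isHermitian : (PhiMax d).IsHermitian := by
  ext p q
  simp only [PhiMax, conjTranspose_apply, of_apply, and_comm]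
  split <;> simp

end aux

/-- The maximum probability of simulating an ideal quantum channel (the identity channel)
from the future to the past is 1/d². -/
theorem identity_channel_sim_prob (d : ℕ) (hd : 1 ≤ d) (p : ℝ) (hp : 0 ≤ p) :
    (∃ ρ₀ : Matrix (Fin d) (Fin d) ℂ, ρ₀.PosSemidef ∧ ρ₀.trace = 1 ∧
        (ρ₀ ⊗ₖ (1 : Matrix (Fin d) (Fin d) ℂ) - (p : ℂ) • PhiMax d).PosSemidef)
      ↔ p ≤ 1 / (d : ℝ) ^ 2 := by

  have hd0 : (0:ℝ) < (d:ℝ) := by exact_mod_cast hd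
  have hd2 : (0:ℝ) < (d:ℝ)^2 := by positivity
  constructor
  · rintro ⟨ρ₀, hρ, htr, hM⟩
    have h := hM.dotProduct_mulVec_nonneg (vI d)
    rw [sub_mulVec, dotProduct_sub, smul_mulVec, dotProduct_smul,
      kron_quadform, phi_quadform, htr] at h
    have hs : (∑ i : Fin d, vI d (i, i)) = (d : ℂ) := by simp [vI]
    rw [hs, map_natCast] at h
    have hcast : (1 : ℂ) - (p:ℂ) • ((d:ℂ) * (d:ℂ)) = ((1 - p * (d:ℝ)^2 : ℝ) : ℂ) := by
      rw [smul_eq_mul]; push_cast; ring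
    rw [hcast, Complex.zero_le_real] at h
    rw [le_div_iff₀ hd2]
    linarith
  · intro hpd
    have hdC : ((d:ℂ))⁻¹ = (((d:ℝ)⁻¹ : ℝ) : ℂ) := by push_cast; ring
    have hdC0 : (d:ℂ) ≠ 0 := by exact_mod_cast hd0.ne'
    refine ⟨((d:ℂ))⁻¹ • 1, ?_, ?_, ?_⟩
    · refine .of_dotProduct_mulVec_nonneg ?_ ?_
      · unfold Matrix.IsHermitian
        rw [conjTranspose_smul, conjTranspose_one, hdC]
        simp [Complex.star_def, Complex.conj_ofReal]
      · intro x
        rw [smul_mulVec, one_mulVec, dotProduct_smul, smul_eq_mul]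
        have h1 : (0:ℂ) ≤ star x ⬝ᵥ x := dotProduct_star_self_nonneg x
        have hnn : (0:ℂ) ≤ ((d:ℂ))⁻¹ := by
          rw [hdC, Complex.zero_le_real]; positivity
        exact mul_nonneg hnn h1
    · rw [Matrix.trace_smul, Matrix.trace_one, smul_eq_mul]
      simp [hdC0]
    · have hkron : (((d:ℂ))⁻¹ • (1 : Matrix (Fin d) (Fin d) ℂ)) ⊗ₖ (1 : Matrix (Fin d) (Fin d) ℂ)
          = ((d:ℂ))⁻¹ • (1 : Matrix (Fin d × Fin d) (Fin d × Fin d) ℂ) := by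
        rw [smul_kronecker, one_kronecker_one]
      rw [hkron]
      refine .of_dotProduct_mulVec_nonneg ?_ ?_
      · unfold Matrix.IsHermitian
        rw [conjTranspose_sub, conjTranspose_smul, conjTranspose_smul, conjTranspose_one,
          phi_isHermitian.eq, hdC]
        simp [Complex.star_def, Complex.conj_ofReal]
      · intro x
        rw [sub_mulVec, dotProduct_sub, smul_mulVec, smul_mulVec,
          one_mulVec, dotProduct_smul, dotProduct_smul, phi_quadform]
        set s : ℂ := ∑ i, x (i, i) with hs
        set N : ℝ := ∑ q : Fin d × Fin d, Complex.normSq (x q) with hN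
        have hxx : star x ⬝ᵥ x = (N : ℂ) := by
          simp [dotProduct, hN, Complex.normSq_eq_conj_mul_self]
        have hss : (starRingEnd ℂ) s * s = (Complex.normSq s : ℂ) := by
          rw [Complex.normSq_eq_conj_mul_self]
        rw [hxx, hss]
        have key : p * Complex.normSq s ≤ (d:ℝ)⁻¹ * N := by
          have h1 : Complex.normSq s ≤ d * ∑ i, Complex.normSq (x (i, i)) := by
            have ha : ‖s‖ ≤ ∑ i, ‖x (i, i)‖ :=
              norm_sum_le _ _
            have hb : (∑ i, ‖x (i, i)‖)^2
                ≤ (Fintype.card (Fin d) : ℝ) * ∑ i, (‖x (i, i)‖)^2 :=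
              sq_sum_le_card_mul_sum_sq
            calc Complex.normSq s = ‖s‖ ^ 2 := (Complex.sq_norm s).symm
              _ ≤ (∑ i, ‖x (i, i)‖)^2 := by
                  apply pow_le_pow_left₀ (norm_nonneg _) ha
              _ ≤ (d : ℝ) * ∑ i, (‖x (i, i)‖)^2 := by
                  simpa using hb
              _ = d * ∑ i, Complex.normSq (x (i, i)) := by
                  simp [Complex.sq_norm]
          have h2 : ∑ i, Complex.normSq (x (i, i)) ≤ N := by
            rw [hN, Fintype.sum_prod_type]
            apply Finset.sum_le_sum
            intro i _
            exact Finset.single_le_sum (f := fun j => Complex.normSq (x (i, j)))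
              (fun j _ => Complex.normSq_nonneg _) (Finset.mem_univ i)
          calc p * Complex.normSq s ≤ (1 / (d:ℝ)^2) * Complex.normSq s :=
                mul_le_mul_of_nonneg_right hpd (Complex.normSq_nonneg _)
            _ ≤ (1 / (d:ℝ)^2) * (d * N) := by
                apply mul_le_mul_of_nonneg_left _ (by positivity)
                calc Complex.normSq s ≤ d * ∑ i, Complex.normSq (x (i, i)) := h1
                  _ ≤ d * N := by
                      apply mul_le_mul_of_nonneg_left h2 (by positivity)
            _ = (d:ℝ)⁻¹ * N := by field_simp
        have heq : ((d:ℂ))⁻¹ • (N:ℂ) - (p:ℂ) • (Complex.normSq s : ℂ)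
            = (((d:ℝ)⁻¹ * N - p * Complex.normSq s : ℝ) : ℂ) := by
          rw [smul_eq_mul, smul_eq_mul, hdC]; push_cast; ring
        rw [heq, Complex.zero_le_real]
        linarith
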